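/- In the setting of the naive distortion lemma, if additionally the intervals I, f(I), …, f^{n−1}(I) have pairwise disjoint interiors and all lie in M = [0,1], and α = 1, then Σ_{i=0}^{n−1}|f^i(I)| ≤ 1, hence |(f^n)'(x)|/|(f^n)'(y)| ≤ exp(H/β) for all x, y ∈ I, with bound independent of n. -/

import Mathlib

open MeasureTheory

/-- Length of a subset of `ℝ`. -/
noncomputable def len (s : Set ℝ) : ℝ := (volume s).toReal

/-- Naive distortion lemma with pairwise disjoint interiors: since the images of `I`
under `f^[0], …, f^[n-1]` are subintervals of `[0,1]` with pairwise disjoint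
interiors, their total length is at most `1` and the distortion of `f^[n]` is at
most `exp (H/β)`, independently of `n`. -/
theorem stmt_10 (f : ℝ → ℝ) (H β : ℝ) (hH : 0 < H) (hβ : 0 < β)
    (hmaps : Set.MapsTo f (Set.Icc 0 1) (Set.Icc 0 1))
    (hdiff : ∀ x ∈ Set.Icc (0 : ℝ) 1, DifferentiableAt ℝ f x)
    (hLip : ∀ u ∈ Set.Icc (0 : ℝ) 1, ∀ v ∈ Set.Icc (0 : ℝ) 1,
      |deriv f u - deriv f v| ≤ H * |u - v|)
    (V : Set ℝ) (hV : IsCompact V) (hVM : V ⊆ Set.Icc 0 1)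
    (hβV : ∀ x ∈ V, β ≤ |deriv f x|)
    (c d : ℝ) (hI : Set.Icc c d ⊆ Set.Icc (0 : ℝ) 1)
    (n : ℕ)
    (hiter : ∀ i < n, f^[i] '' Set.Icc c d ⊆ V)
    (hinj : ∀ i ≤ n, Set.InjOn (f^[i]) (Set.Icc c d))
    (hdisj : ∀ i < n, ∀ j < n, i ≠ j →
      interior (f^[i] '' Set.Icc c d) ∩ interior (f^[j] '' Set.Icc c d) = ∅) :
    (∑ i ∈ Finset.range n, len (f^[i] '' Set.Icc c d)) ≤ 1 ∧
      ∀ x ∈ Set.Icc c d, ∀ y ∈ Set.Icc c d,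
        |deriv (f^[n]) x| / |deriv (f^[n]) y| ≤ Real.exp (H / β) := by
  by_cases hcd : c ≤ d
  case neg =>
    have hempty : Set.Icc c d = ∅ := Set.Icc_eq_empty hcd
    constructor
    · have : ∀ i, len (f^[i] '' Set.Icc c d) = 0 := by
        intro i; simp [hempty, len]
      simp [this]
    · intro x hx; rw [hempty] at hx; exact absurd hx (Set.notMem_empty x)
  -- main case
  have hcont : ContinuousOn f (Set.Icc 0 1) :=
    fun x hx => (hdiff x hx).continuousAt.continuousWithinAt
  have hmapsI : ∀ i : ℕ, Set.MapsTo (f^[i]) (Set.Icc (0:ℝ) 1) (Set.Icc 0 1) :=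
    fun i => hmaps.iterate i
  have hcontI : ∀ i : ℕ, ContinuousOn (f^[i]) (Set.Icc (0:ℝ) 1) := by
    intro i; induction i with
    | zero => simpa using continuousOn_id
    | succ i ih =>
      rw [Function.iterate_succ']
      exact hcont.comp ih (hmapsI i)
  set a : ℕ → ℝ := fun i => sInf (f^[i] '' Set.Icc c d) with ha
  set b : ℕ → ℝ := fun i => sSup (f^[i] '' Set.Icc c d) with hb
  have himg : ∀ i : ℕ, f^[i] '' Set.Icc c d = Set.Icc (a i) (b i) := by
    intro i
    apply eq_Icc_of_connected_compact
    · exact ⟨⟨f^[i] c, ⟨c, Set.left_mem_Icc.2 hcd, rfl⟩⟩,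
        (isPreconnected_Icc).image _ ((hcontI i).mono hI)⟩
    · exact isCompact_Icc.image_of_continuousOn ((hcontI i).mono hI)
  have hab : ∀ i : ℕ, a i ≤ b i := by
    intro i
    have : (Set.Icc (a i) (b i)).Nonempty := by
      rw [← himg i]; exact ⟨f^[i] c, ⟨c, Set.left_mem_Icc.2 hcd, rfl⟩⟩
    exact Set.nonempty_Icc.1 this
  have hlen : ∀ i : ℕ, len (f^[i] '' Set.Icc c d) = b i - a i := by
    intro i
    rw [himg i, len, Real.volume_Icc, ENNReal.toReal_ofReal (by linarith [hab i])]
  have hsub01 : ∀ i < n, f^[i] '' Set.Icc c d ⊆ Set.Icc 0 1 :=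
    fun i hi => (hiter i hi).trans hVM
  -- Part 1: sum of lengths ≤ 1
  have sumlen : (∑ i ∈ Finset.range n, len (f^[i] '' Set.Icc c d)) ≤ 1 := by
    have hUnion : (⋃ i ∈ Finset.range n, Set.Ioo (a i) (b i)) ⊆ Set.Icc (0:ℝ) 1 := by
      intro x hx
      simp only [Set.mem_iUnion, Finset.mem_range] at hx
      obtain ⟨i, hi, hxi⟩ := hx
      exact hsub01 i hi (by rw [himg i]; exact Set.Ioo_subset_Icc_self hxi)
    have hdisj' : (↑(Finset.range n) : Set ℕ).PairwiseDisjoint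
        (fun i => Set.Ioo (a i) (b i)) := by
      intro i hi j hj hij
      simp only [Finset.coe_range, Set.mem_Iio] at hi hj
      have := hdisj i hi j hj hij
      rw [himg i, himg j, interior_Icc, interior_Icc] at this
      exact Set.disjoint_iff_inter_eq_empty.2 this
    have hmeas := measure_biUnion_finset (μ := volume) hdisj' (fun i _ => measurableSet_Ioo)
    have hle : (∑ i ∈ Finset.range n, volume (Set.Ioo (a i) (b i))) ≤ 1 := by
      rw [← hmeas]
      calc volume (⋃ i ∈ Finset.range n, Set.Ioo (a i) (b i))
          ≤ volume (Set.Icc (0:ℝ) 1) := measure_mono hUnion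
        _ = 1 := by rw [Real.volume_Icc]; norm_num
    have hstep : ∀ i ∈ Finset.range n,
        len (f^[i] '' Set.Icc c d) = (volume (Set.Ioo (a i) (b i))).toReal := by
      intro i _
      rw [hlen i, Real.volume_Ioo, ENNReal.toReal_ofReal (by linarith [hab i])]
    rw [Finset.sum_congr rfl hstep, ← ENNReal.toReal_sum
      (fun i _ => (by rw [Real.volume_Ioo]; exact ENNReal.ofReal_ne_top))]
    calc (∑ i ∈ Finset.range n, volume (Set.Ioo (a i) (b i))).toReal
        ≤ (1 : ENNReal).toReal := ENNReal.toReal_mono ENNReal.one_ne_top hle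
      _ = 1 := by simp
  refine ⟨sumlen, ?_⟩
  -- Part 2: distortion bound
  have hmem01 : ∀ i < n, ∀ x ∈ Set.Icc c d, f^[i] x ∈ Set.Icc (0:ℝ) 1 :=
    fun i hi x hx => hVM (hiter i hi ⟨x, hx, rfl⟩)
  have key : ∀ m ≤ n, ∀ x ∈ Set.Icc c d,
      HasDerivAt (f^[m]) (∏ i ∈ Finset.range m, deriv f (f^[i] x)) x := by
    intro m
    induction m with
    | zero =>
      intro _ x _
      simpa using (hasDerivAt_id x)
    | succ m ih =>
      intro hm x hx
      have h1 := ih (le_trans (Nat.le_succ m) hm) x hx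
      have h2 : HasDerivAt f (deriv f (f^[m] x)) (f^[m] x) :=
        (hdiff _ (hmem01 m (lt_of_lt_of_le (Nat.lt_succ_self m) hm) x hx)).hasDerivAt
      have := h2.comp x h1
      rw [← Function.iterate_succ'] at this
      rw [Finset.prod_range_succ]
      convert this using 1
      · rfl
      · rfl
      · ring
  have hderiv : ∀ x ∈ Set.Icc c d,
      deriv (f^[n]) x = ∏ i ∈ Finset.range n, deriv f (f^[i] x) :=
    fun x hx => (key n le_rfl x hx).deriv
  intro x hx y hy
  rw [hderiv x hx, hderiv y hy, Finset.abs_prod, Finset.abs_prod,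
    ← Finset.prod_div_distrib]
  have hB : ∀ i ∈ Finset.range n, β ≤ |deriv f (f^[i] y)| := by
    intro i hi
    exact hβV _ (hiter i (Finset.mem_range.1 hi) ⟨y, hy, rfl⟩)
  have hterm : ∀ i ∈ Finset.range n,
      |deriv f (f^[i] x)| / |deriv f (f^[i] y)| ≤
        Real.exp (|deriv f (f^[i] x) - deriv f (f^[i] y)| / β) := by
    intro i hi
    have hBi := hB i hi
    have hBpos : 0 < |deriv f (f^[i] y)| := lt_of_lt_of_le hβ hBi
    have h1 : |deriv f (f^[i] x)| ≤
        |deriv f (f^[i] y)| + |deriv f (f^[i] x) - deriv f (f^[i] y)| := by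
      have := abs_sub_abs_le_abs_sub (deriv f (f^[i] x)) (deriv f (f^[i] y))
      linarith
    have h2 : |deriv f (f^[i] x)| / |deriv f (f^[i] y)| ≤
        1 + |deriv f (f^[i] x) - deriv f (f^[i] y)| / β := by
      rw [div_le_iff₀ hBpos]
      have hnn : 0 ≤ |deriv f (f^[i] x) - deriv f (f^[i] y)| := abs_nonneg _
      have h3 : |deriv f (f^[i] x) - deriv f (f^[i] y)| / β * β =
          |deriv f (f^[i] x) - deriv f (f^[i] y)| := div_mul_cancel₀ _ (ne_of_gt hβ)
      nlinarith [div_nonneg hnn (le_of_lt hβ)]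
    calc |deriv f (f^[i] x)| / |deriv f (f^[i] y)|
        ≤ 1 + |deriv f (f^[i] x) - deriv f (f^[i] y)| / β := h2
      _ ≤ Real.exp (|deriv f (f^[i] x) - deriv f (f^[i] y)| / β) := by
          have := Real.add_one_le_exp (|deriv f (f^[i] x) - deriv f (f^[i] y)| / β)
          linarith
  have hprod : (∏ i ∈ Finset.range n, |deriv f (f^[i] x)| / |deriv f (f^[i] y)|) ≤
      ∏ i ∈ Finset.range n,
        Real.exp (|deriv f (f^[i] x) - deriv f (f^[i] y)| / β) := by
    apply Finset.prod_le_prod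
    · intro i _; positivity
    · exact hterm
  refine hprod.trans ?_
  rw [← Real.exp_sum]
  apply Real.exp_le_exp.2
  have hdist : ∀ i ∈ Finset.range n,
      |deriv f (f^[i] x) - deriv f (f^[i] y)| / β ≤
        H / β * len (f^[i] '' Set.Icc c d) := by
    intro i hi
    have hi' := Finset.mem_range.1 hi
    have hxy : |f^[i] x - f^[i] y| ≤ len (f^[i] '' Set.Icc c d) := by
      have hmx : f^[i] x ∈ Set.Icc (a i) (b i) := by
        rw [← himg i]; exact ⟨x, hx, rfl⟩
      have hmy : f^[i] y ∈ Set.Icc (a i) (b i) := by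
        rw [← himg i]; exact ⟨y, hy, rfl⟩
      rw [hlen i]
      rw [abs_sub_le_iff]
      constructor <;> [skip; skip] <;>
        · obtain ⟨h1, h2⟩ := hmx; obtain ⟨h3, h4⟩ := hmy; linarith
    have hL := hLip _ (hmem01 i hi' x hx) _ (hmem01 i hi' y hy)
    have : |deriv f (f^[i] x) - deriv f (f^[i] y)| ≤ H * len (f^[i] '' Set.Icc c d) :=
      hL.trans (by nlinarith)
    rw [div_le_iff₀ hβ]
    calc |deriv f (f^[i] x) - deriv f (f^[i] y)| ≤ H * len (f^[i] '' Set.Icc c d) := this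
      _ = H / β * len (f^[i] '' Set.Icc c d) * β := by field_simp
  calc (∑ i ∈ Finset.range n, |deriv f (f^[i] x) - deriv f (f^[i] y)| / β)
      ≤ ∑ i ∈ Finset.range n, H / β * len (f^[i] '' Set.Icc c d) :=
        Finset.sum_le_sum hdist
    _ = H / β * ∑ i ∈ Finset.range n, len (f^[i] '' Set.Icc c d) := by
        rw [Finset.mul_sum]
    _ ≤ H / β * 1 := by
        apply mul_le_mul_of_nonneg_left sumlen (by positivity)
    _ = H / β := mul_one _
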